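/- Let ε ∈ ∂E_r^(d) have exactly ℓ+1 distinct coordinate values with ℓ ≥ 1, and write r = δℓ + Z with δ, Z non-negative integers satisfying Z < ℓ. Then the 𝐞-permutation code C = {[U_δ'] : δ' ∈ Sym(d)·ε} satisfies dist(C) ≤ 2δ. -/

import Mathlib

open Pointwise

namespace SphericalSubmoduleCodes

variable {R : Type*} [CommRing R] {V : Type*} [AddCommGroup V] [Module R V]

/-- `nmin π U₁ U₂ = min {m ≥ 0 : π^m U₁ ⊆ U₂}`. -/
noncomputable def nmin (π : R) (U₁ U₂ : Submodule R V) : ℕ :=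
  sInf {m : ℕ | (π ^ m) • U₁ ≤ U₂}

/-- The distance `dist(U₁,U₂) = min{m : π^m U₁ ⊆ U₂} + min{n : π^n U₂ ⊆ U₁}`
(used for boundary submodules, where `Ũ = U`). -/
noncomputable def distMod (π : R) (U₁ U₂ : Submodule R V) : ℕ :=
  nmin π U₁ U₂ + nmin π U₂ U₁

/-- `m_U = max {0 ≤ m ≤ r : U ⊆ π^m V}`. -/
noncomputable def mExp (π : R) (r : ℕ) (U : Submodule R V) : ℕ :=
  sSup {m : ℕ | m ≤ r ∧ U ≤ (π ^ m) • (⊤ : Submodule R V)}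

/-- `Ũ`, the unique maximal submodule with `π^{m_U} Ũ = U`: the kernel of
`x ↦ π^{m_U} x + U`. -/
noncomputable def tilde (π : R) (r : ℕ) (U : Submodule R V) : Submodule R V :=
  U.comap ((π ^ mExp π r U) • (LinearMap.id : V →ₗ[R] V))

/-- The boundary `∂L(V_r) = {U : π^{r-1} V ⊄ U and U ⊄ π V}`. -/
def boundary (π : R) (r : ℕ) : Set (Submodule R V) :=
  {U | ¬ ((π ^ (r - 1)) • (⊤ : Submodule R V) ≤ U) ∧ ¬ (U ≤ π • (⊤ : Submodule R V))}

/-- The minimum distance of a code of (boundary) submodules. -/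
noncomputable def minDist (π : R) (C : Set (Submodule R V)) : ℕ :=
  sInf {n : ℕ | ∃ U₁ ∈ C, ∃ U₂ ∈ C, U₁ ≠ U₂ ∧ distMod π U₁ U₂ = n}

/-- homothety: `U ∼ U' ↔ Ũ = Ũ'`. -/
noncomputable def homSetoid (π : R) (r : ℕ) : Setoid (Submodule R V) :=
  Setoid.ker (tilde π r)

/-- The distance on homothety classes. -/
noncomputable def distClass (π : R) (r : ℕ) :
    Quotient (homSetoid (V := V) π r) → Quotient (homSetoid (V := V) π r) → ℕ :=
  Quotient.lift₂
    (fun U₁ U₂ => nmin π (tilde π r U₁) (tilde π r U₂) + nmin π (tilde π r U₂) (tilde π r U₁))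
    (by
      intro a₁ b₁ a₂ b₂ h₁ h₂
      have ha : tilde π r a₁ = tilde π r a₂ := h₁
      have hb : tilde π r b₁ = tilde π r b₂ := h₂
      simp only [ha, hb])

/-- The Grassmannian: free rank-`n` submodules. -/
def Grass (R : Type*) [CommRing R] {V : Type*} [AddCommGroup V] [Module R V]
    (n : ℕ) : Set (Submodule R V) :=
  {U | Module.Free R U ∧ Module.finrank R U = n}

/-- `binom(a,b)_X = ∏_{i=0}^{b-1} (1 - X^{a-i})/(1 - X^{b-i})`. -/
def qbinom (X : ℚ) (a b : ℕ) : ℚ :=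
  ∏ i ∈ Finset.range b, (1 - X ^ (a - i)) / (1 - X ^ (b - i))

end SphericalSubmoduleCodes

namespace SphericalSubmoduleCodes

/-- `U_δ = Rπ^{δ₁}e₁ ⊕ … ⊕ Rπ^{δ_d}e_d`. -/
noncomputable def Udelta {R : Type*} [CommRing R] {V : Type*} [AddCommGroup V] [Module R V]
    {d : ℕ} (π : R) (b : Module.Basis (Fin d) R V) (δ : Fin d → ℕ) : Submodule R V :=
  ⨆ i : Fin d, Submodule.span R {(π ^ δ i) • b i}

/-- The `𝐞`-permutation code `{[U_δ] : δ ∈ Sym(d)·ε}`. -/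
noncomputable def permCode {R : Type*} [CommRing R] {V : Type*} [AddCommGroup V] [Module R V]
    {d : ℕ} (π : R) (b : Module.Basis (Fin d) R V) (ε : Fin d → ℕ) : Set (Submodule R V) :=
  {U | ∃ σ : Equiv.Perm (Fin d), U = Udelta π b (ε ∘ σ)}

end SphericalSubmoduleCodes

namespace SphericalSubmoduleCodes


section Aux

variable {R : Type*} [CommRing R] {V : Type*} [AddCommGroup V] [Module R V]

lemma Udelta_eq_span {d : ℕ} (π : R) (b : Module.Basis (Fin d) R V) (δ : Fin d → ℕ) :
    Udelta π b δ = Submodule.span R (Set.range fun i => (π ^ δ i) • b i) := by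
  rw [Submodule.span_range_eq_iSup]; rfl

lemma smul_Udelta_le {d : ℕ} (π : R) (b : Module.Basis (Fin d) R V) (δ δ' : Fin d → ℕ) (m : ℕ)
    (h : ∀ k, δ' k ≤ m + δ k) :
    (π ^ m) • Udelta π b δ ≤ Udelta π b δ' := by
  rintro _ ⟨x, hx, rfl⟩
  rw [Udelta_eq_span] at hx ⊢
  simp only [DistribSMul.toLinearMap_apply]
  induction hx using Submodule.span_induction with
  | mem x hx =>
      obtain ⟨k, rfl⟩ := hx
      have : (π ^ m) • (π ^ δ k) • b k = (π ^ (m + δ k - δ' k)) • (π ^ δ' k) • b k := by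
        rw [smul_smul, smul_smul, ← pow_add, ← pow_add]
        congr 2
        have := h k
        omega
      rw [this]
      exact Submodule.smul_mem _ _ (Submodule.subset_span ⟨k, rfl⟩)
  | zero => simp only [smul_zero]; exact Submodule.zero_mem _
  | add x y _ _ hx hy => rw [smul_add]; exact Submodule.add_mem _ hx hy
  | smul c x _ hx => rw [smul_comm]; exact Submodule.smul_mem _ _ hx

lemma not_mem_span_aux {d r : ℕ} (π : R) (b : Module.Basis (Fin d) R V) (δ : Fin d → ℕ)
    (i : Fin d) (a : ℕ)
    (ha : a < δ i) (har : δ i ≤ r) (hπr : π ^ r = 0) (hπr' : π ^ (r - 1) ≠ 0)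
    (hx : (π ^ a) • b i ∈ Submodule.span R (Set.range fun k => (π ^ δ k) • b k)) :
    False := by
  rw [Submodule.mem_span_range_iff_exists_fun] at hx
  obtain ⟨c, hc⟩ := hx
  have h1 := congrArg (fun x => b.repr x i) hc
  simp only [map_sum, map_smul, Module.Basis.repr_self, Finsupp.coe_smul, Finsupp.coe_finset_sum,
    Finset.sum_apply, Pi.smul_apply, Finsupp.single_apply, smul_eq_mul, mul_ite, mul_one,
    mul_zero, Finset.sum_ite_eq', Finset.mem_univ, if_true] at h1
  have h2 : π ^ (r - 1) = c i * π ^ (δ i + (r - 1 - a)) := by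
    have : π ^ a * π ^ (r - 1 - a) = π ^ (r - 1) := by rw [← pow_add]; congr 1; omega
    rw [← this, ← h1, pow_add, mul_assoc]
  have h3 : π ^ (δ i + (r - 1 - a)) = 0 := by
    have : δ i + (r - 1 - a) = r + (δ i + (r - 1 - a) - r) := by omega
    rw [this, pow_add, hπr, zero_mul]
  rw [h3, mul_zero] at h2
  exact hπr' h2

lemma exists_small_gap (d r ℓ δ₀ Z : ℕ) (hd : 2 ≤ d) (ε : Fin d → ℕ)
    (hεanti : ∀ i j : Fin d, i ≤ j → ε j ≤ ε i)
    (hε0 : ε ⟨0, by omega⟩ = r)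
    (hvals : (Finset.image ε Finset.univ).card = ℓ + 1)
    (hrZ : r = δ₀ * ℓ + Z) (hZ : Z < ℓ) :
    ∃ i j : Fin d, ε j < ε i ∧ ε i - ε j ≤ δ₀ := by
  by_contra hcon
  push_neg at hcon
  set S := Finset.image ε Finset.univ with hS
  have hle : ∀ x ∈ S, x ≤ r := by
    intro x hx
    obtain ⟨i, _, rfl⟩ := Finset.mem_image.1 hx
    calc ε i ≤ ε ⟨0, by omega⟩ := hεanti _ i (Fin.mk_le_of_le_val (by omega))
    _ = r := hε0
  have hinj : Set.InjOn (fun x => x / (δ₀ + 1)) S := by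
    intro x hx y hy hxy
    dsimp only at hxy
    obtain ⟨i, _, rfl⟩ := Finset.mem_image.1 hx
    obtain ⟨j, _, rfl⟩ := Finset.mem_image.1 hy
    by_contra hne
    rcases Nat.lt_or_ge (ε i) (ε j) with h | h
    · have h1 := hcon j i h
      have : ε i / (δ₀ + 1) < ε j / (δ₀ + 1) := by
        calc ε i / (δ₀ + 1) < ε i / (δ₀ + 1) + 1 := Nat.lt_succ_self _
        _ = (ε i + (δ₀ + 1)) / (δ₀ + 1) := by rw [Nat.add_div_right _ (by omega)]
        _ ≤ ε j / (δ₀ + 1) := Nat.div_le_div_right (by omega)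
      omega
    · rcases Nat.lt_or_ge (ε j) (ε i) with h' | h'
      · have h1 := hcon i j h'
        have : ε j / (δ₀ + 1) < ε i / (δ₀ + 1) := by
          calc ε j / (δ₀ + 1) < ε j / (δ₀ + 1) + 1 := Nat.lt_succ_self _
          _ = (ε j + (δ₀ + 1)) / (δ₀ + 1) := by rw [Nat.add_div_right _ (by omega)]
          _ ≤ ε i / (δ₀ + 1) := Nat.div_le_div_right (by omega)
        omega
      · omega
  have hsub : S.image (fun x => x / (δ₀ + 1)) ⊆ Finset.range ℓ := by
    intro y hy
    obtain ⟨x, hx, rfl⟩ := Finset.mem_image.1 hy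
    have hxr := hle x hx
    have hlt : x / (δ₀ + 1) < ℓ := by
      apply Nat.div_lt_of_lt_mul
      calc x ≤ r := hxr
      _ < ℓ * (δ₀ + 1) := by
          calc r = δ₀ * ℓ + Z := hrZ
          _ < δ₀ * ℓ + ℓ := by omega
          _ = ℓ * (δ₀ + 1) := by ring
      _ = (δ₀ + 1) * ℓ := by ring
    simpa using hlt
  have h1 : (S.image (fun x => x / (δ₀ + 1))).card = ℓ + 1 := by
    rw [Finset.card_image_of_injOn hinj, hvals]
  have h2 := Finset.card_le_card hsub
  rw [h1, Finset.card_range] at h2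
  omega

end Aux

/-- If `ε ∈ ∂E_r^(d)` has exactly `ℓ+1` distinct values (`ℓ ≥ 1`) and `r = δ₀ℓ + Z`
with `Z < ℓ`, then the `𝐞`-permutation code `C = Sym(d)·ε` satisfies `dist(C) ≤ 2δ₀`. -/
theorem permCode_minDist_le
    {R : Type*} [CommRing R] [Fintype R] [IsLocalRing R]
    {V : Type*} [AddCommGroup V] [Module R V]
    (d r : ℕ) (hd : 2 ≤ d) (hr : 1 ≤ r) (b : Module.Basis (Fin d) R V)
    (π : R) (hmax : IsLocalRing.maximalIdeal R = Ideal.span {π})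
    (hπr : π ^ r = 0) (hπr' : π ^ (r - 1) ≠ 0)
    (ε : Fin d → ℕ)
    (hεanti : ∀ i j : Fin d, i ≤ j → ε j ≤ ε i)
    (hε0 : ε ⟨0, by omega⟩ = r) (hεlast : ε ⟨d - 1, by omega⟩ = 0)
    (ℓ δ₀ Z : ℕ) (hℓ : 1 ≤ ℓ)
    (hvals : (Finset.image ε Finset.univ).card = ℓ + 1)
    (hrZ : r = δ₀ * ℓ + Z) (hZ : Z < ℓ) :
    minDist π (permCode π b ε) ≤ 2 * δ₀ := by
    obtain ⟨i, j, hlt, hgap⟩ := exists_small_gap d r ℓ δ₀ Z hd ε hεanti hε0 hvals hrZ hZ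
    have hij : i ≠ j := by
      intro h; rw [h] at hlt; omega
    have hεir : ε i ≤ r := by
      calc ε i ≤ ε ⟨0, by omega⟩ := hεanti _ i (Fin.mk_le_of_le_val (by omega))
      _ = r := hε0
    set m := ε i - ε j with hm
    set ε' := ε ∘ (Equiv.swap i j) with hε'
    have hε'i : ε' i = ε j := by simp [hε', Equiv.swap_apply_left]
    have hε'j : ε' j = ε i := by simp [hε', Equiv.swap_apply_right]
    have hε'k : ∀ k, k ≠ i → k ≠ j → ε' k = ε k := by
      intro k h1 h2
      simp [hε', Equiv.swap_apply_of_ne_of_ne h1 h2]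
    set U₁ := Udelta π b ε with hU₁
    set U₂ := Udelta π b ε' with hU₂
    have hU₁mem : U₁ ∈ permCode π b ε :=
      ⟨Equiv.refl _, by simp [hU₁, Function.comp_def]⟩
    have hne : U₁ ≠ U₂ := by
      intro heq
      have hmem : (π ^ ε j) • b i ∈ U₂ := by
        rw [hU₂, Udelta_eq_span]
        have : (π ^ ε j) • b i = (π ^ ε' i) • b i := by rw [hε'i]
        rw [this]
        exact Submodule.subset_span ⟨i, rfl⟩
      rw [← heq, hU₁, Udelta_eq_span] at hmem
      exact not_mem_span_aux π b ε i (ε j) hlt hεir hπr hπr' hmem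
    have h12 : (π ^ m) • U₁ ≤ U₂ := by
      apply smul_Udelta_le
      intro k
      by_cases h1 : k = i
      · subst h1; rw [hε'i]; omega
      · by_cases h2 : k = j
        · subst h2; rw [hε'j]; omega
        · rw [hε'k k h1 h2]; omega
    have h21 : (π ^ m) • U₂ ≤ U₁ := by
      apply smul_Udelta_le
      intro k
      by_cases h1 : k = i
      · subst h1; rw [hε'i]; omega
      · by_cases h2 : k = j
        · subst h2; rw [hε'j]; omega
        · rw [hε'k k h1 h2]; omega
    have hn1 : nmin π U₁ U₂ ≤ m := Nat.sInf_le h12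
    have hn2 : nmin π U₂ U₁ ≤ m := Nat.sInf_le h21
    have hdist : distMod π U₁ U₂ ≤ 2 * δ₀ := by
      unfold distMod
      omega
    have hU₂mem' : U₂ ∈ permCode π b ε := ⟨Equiv.swap i j, rfl⟩
    have hmemset : distMod π U₁ U₂ ∈
        {n : ℕ | ∃ W₁ ∈ permCode π b ε, ∃ W₂ ∈ permCode π b ε, W₁ ≠ W₂ ∧ distMod π W₁ W₂ = n} :=
      ⟨U₁, hU₁mem, U₂, hU₂mem', hne, rfl⟩
    calc minDist π (permCode π b ε) ≤ distMod π U₁ U₂ := Nat.sInf_le hmemset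
    _ ≤ 2 * δ₀ := hdist


end SphericalSubmoduleCodes
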